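/- arXiv:0711.4573 — 9 statements merged into one kernel-verified Lean document; each statement's English description precedes it below -/
import Mathlib

section
/- Let X ∈ F be such that Max(X) is defined. Then for every Y ∈ F with Y ∩ X ≠ ∅ and |X| ≤ |Y| ≤ |Max(X)|, the set Y overlaps X or Y overlaps Max(X). -/
/-- Two sets `X` and `Y` overlap if `X ∩ Y ≠ ∅`, `X \ Y ≠ ∅` and `Y \ X ≠ ∅`. -/
def Overlaps {V : Type*} [DecidableEq V] (X Y : Finset V) : Prop :=
  (X ∩ Y).Nonempty ∧ (X \ Y).Nonempty ∧ (Y \ X).Nonempty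

/-- Let `X ∈ F` with `Max(X)` defined (here `M`, the `≼`-least set of size `≥ |X|`
overlapping `X`, for an LF order `lo`). Then every `Y ∈ F` with `Y ∩ X ≠ ∅` and
`|X| ≤ |Y| ≤ |Max(X)|` overlaps `X` or `Max(X)`. -/
theorem stmt0 {V : Type*} [Fintype V] [DecidableEq V]
    (F : Finset (Finset V))
    (lo : LinearOrder {X : Finset V // X ∈ F})
    (hLF : ∀ A B : {X : Finset V // X ∈ F},
      (B : Finset V).card < (A : Finset V).card → lo.lt A B)
    (X M : {X : Finset V // X ∈ F})
    (hMover : Overlaps (M : Finset V) (X : Finset V))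
    (hMcard : (X : Finset V).card ≤ (M : Finset V).card)
    (hMleast : ∀ Z : {X : Finset V // X ∈ F},
      (X : Finset V).card ≤ (Z : Finset V).card →
      Overlaps (Z : Finset V) (X : Finset V) → lo.le M Z)
    (Y : {X : Finset V // X ∈ F})
    (hYX : ((Y : Finset V) ∩ (X : Finset V)).Nonempty)
    (h1 : (X : Finset V).card ≤ (Y : Finset V).card)
    (h2 : (Y : Finset V).card ≤ (M : Finset V).card) :
    Overlaps (Y : Finset V) (X : Finset V) ∨ Overlaps (Y : Finset V) (M : Finset V) := by
  classical
  obtain ⟨hMX, hMdX, hXdM⟩ := hMover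
  by_cases hYsX : ((Y : Finset V) \ (X : Finset V)).Nonempty
  · by_cases hXsY : ((X : Finset V) \ (Y : Finset V)).Nonempty
    · exact Or.inl ⟨hYX, hYsX, hXsY⟩
    · -- X ⊆ Y
      have hXY : (X : Finset V) ⊆ (Y : Finset V) := by
        intro x hx
        by_contra hxy
        exact hXsY ⟨x, Finset.mem_sdiff.2 ⟨hx, hxy⟩⟩
      by_cases hMsY : ((M : Finset V) \ (Y : Finset V)).Nonempty
      · refine Or.inr ⟨?_, ?_, hMsY⟩
        · obtain ⟨x, hx⟩ := hMX
          rw [Finset.mem_inter] at hx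
          exact ⟨x, Finset.mem_inter.2 ⟨hXY hx.2, hx.1⟩⟩
        · obtain ⟨x, hx⟩ := hXdM
          rw [Finset.mem_sdiff] at hx
          exact ⟨x, Finset.mem_sdiff.2 ⟨hXY hx.1, hx.2⟩⟩
      · -- M ⊆ Y, so M = Y
        have hMY : (M : Finset V) ⊆ (Y : Finset V) := by
          intro x hx
          by_contra hxy
          exact hMsY ⟨x, Finset.mem_sdiff.2 ⟨hx, hxy⟩⟩
        have hEq : (M : Finset V) = (Y : Finset V) :=
          Finset.eq_of_subset_of_card_le hMY h2
        exact Or.inl ⟨hYX, hEq ▸ hMdX, hEq ▸ hXdM⟩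
  · -- Y ⊆ X, so Y = X
    have hYsub : (Y : Finset V) ⊆ (X : Finset V) := by
      intro x hx
      by_contra hxy
      exact hYsX ⟨x, Finset.mem_sdiff.2 ⟨hx, hxy⟩⟩
    have hEq : (Y : Finset V) = (X : Finset V) :=
      Finset.eq_of_subset_of_card_le hYsub h1
    refine Or.inr ⟨?_, hEq ▸ hXdM, hEq ▸ hMdX⟩
    rw [hEq, Finset.inter_comm]
    exact hMX
end

section
/- Let v ∈ V and let X, Y, W ∈ F be sets all containing v such that Max(X) is defined and |X| ≤ |Y| ≤ |W| ≤ |Max(X)|. Then X, Y, W and Max(X) all belong to the same overlap class, i.e., they lie in the same connected component of the overlap graph OG(F). -/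
/-- The overlap graph of a family `F`: vertices are the members of `F`,
two sets are adjacent iff they overlap. -/
def OG {V : Type*} [DecidableEq V] (F : Finset (Finset V)) :
    SimpleGraph {X : Finset V // X ∈ F} where
  Adj A B := Overlaps (A : Finset V) (B : Finset V)
  symm := by
    constructor
    rintro A B ⟨h1, h2, h3⟩
    exact ⟨by rwa [Finset.inter_comm], h3, h2⟩
  loopless := by
    constructor
    rintro A ⟨-, h2, -⟩
    simp at h2

/-- Let `v ∈ V` and `X, Y, W ∈ F` all containing `v`, with `Max(X)` defined
(here `M`) and `|X| ≤ |Y| ≤ |W| ≤ |Max(X)|`. Then `X`, `Y`, `W` and `Max(X)` all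
belong to the same connected component of the overlap graph. -/
theorem stmt1 {V : Type*} [Fintype V] [DecidableEq V]
    (F : Finset (Finset V))
    (lo : LinearOrder {X : Finset V // X ∈ F})
    (hLF : ∀ A B : {X : Finset V // X ∈ F},
      (B : Finset V).card < (A : Finset V).card → lo.lt A B)
    (v : V)
    (X Y W M : {X : Finset V // X ∈ F})
    (hvX : v ∈ (X : Finset V)) (hvY : v ∈ (Y : Finset V)) (hvW : v ∈ (W : Finset V))
    (hMover : Overlaps (M : Finset V) (X : Finset V))
    (hMcard : (X : Finset V).card ≤ (M : Finset V).card)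
    (hMleast : ∀ Z : {X : Finset V // X ∈ F},
      (X : Finset V).card ≤ (Z : Finset V).card →
      Overlaps (Z : Finset V) (X : Finset V) → lo.le M Z)
    (h1 : (X : Finset V).card ≤ (Y : Finset V).card)
    (h2 : (Y : Finset V).card ≤ (W : Finset V).card)
    (h3 : (W : Finset V).card ≤ (M : Finset V).card) :
    (OG F).Reachable X Y ∧ (OG F).Reachable Y W ∧ (OG F).Reachable W M := by

  obtain ⟨hMX, hMdX, hXdM⟩ := hMover
  have hXM : (OG F).Adj X M := by
    exact ⟨by rwa [Finset.inter_comm], hXdM, hMdX⟩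
  have key : ∀ Z : {X : Finset V // X ∈ F}, v ∈ (Z : Finset V) →
      (X : Finset V).card ≤ (Z : Finset V).card →
      (Z : Finset V).card ≤ (M : Finset V).card → (OG F).Reachable Z M := by
    intro Z hvZ hZ1 hZ2
    by_cases hZX : (Z : Finset V) = (X : Finset V)
    · have : Z = X := Subtype.ext hZX
      subst this
      exact hXM.reachable
    by_cases hXZ : ((X : Finset V) \ (Z : Finset V)).Nonempty
    · by_cases hZXd : ((Z : Finset V) \ (X : Finset V)).Nonempty
      · have hadj : (OG F).Adj Z X :=
          ⟨⟨v, Finset.mem_inter.mpr ⟨hvZ, hvX⟩⟩, hZXd, hXZ⟩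
        exact hadj.reachable.trans hXM.reachable
      · rw [Finset.not_nonempty_iff_eq_empty, Finset.sdiff_eq_empty_iff_subset] at hZXd
        exact absurd (Finset.eq_of_subset_of_card_le hZXd hZ1) hZX
    · rw [Finset.not_nonempty_iff_eq_empty, Finset.sdiff_eq_empty_iff_subset] at hXZ
      by_cases hMZ : ((M : Finset V) \ (Z : Finset V)).Nonempty
      · obtain ⟨m, hm⟩ := hMX
        rw [Finset.mem_inter] at hm
        have hZMi : ((Z : Finset V) ∩ (M : Finset V)).Nonempty :=
          ⟨m, Finset.mem_inter.mpr ⟨hXZ hm.2, hm.1⟩⟩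
        obtain ⟨x, hx⟩ := hXdM
        rw [Finset.mem_sdiff] at hx
        have hZdM : ((Z : Finset V) \ (M : Finset V)).Nonempty :=
          ⟨x, Finset.mem_sdiff.mpr ⟨hXZ hx.1, hx.2⟩⟩
        exact (SimpleGraph.Adj.reachable (⟨hZMi, hZdM, hMZ⟩ : (OG F).Adj Z M))
      · rw [Finset.not_nonempty_iff_eq_empty, Finset.sdiff_eq_empty_iff_subset] at hMZ
        have : Z = M := Subtype.ext (Finset.eq_of_subset_of_card_le hMZ hZ2).symm
        exact this ▸ SimpleGraph.Reachable.refl Z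
  have hXr : (OG F).Reachable X M := hXM.reachable
  have hYr := key Y hvY h1 (h2.trans h3)
  have hWr := key W hvW (h1.trans h2) h3
  exact ⟨hXr.trans hYr.symm, hYr.trans hWr.symm, hWr⟩
end

section
/- Let A, B ∈ F be two overlapping sets with |A| ≤ |B|, and let v ∈ A ∩ B. Then every Y ∈ F with v ∈ Y and |A| ≤ |Y| ≤ |B| belongs to the same overlap class as A and B, i.e., A, B and Y lie in the same connected component of the overlap graph OG(F). -/
/-- Let `A, B ∈ F` be overlapping with `|A| ≤ |B|` and let `v ∈ A ∩ B`. Then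
every `Y ∈ F` with `v ∈ Y` and `|A| ≤ |Y| ≤ |B|` is in the same connected
component of the overlap graph as `A` and `B`. -/
theorem stmt3 {V : Type*} [Fintype V] [DecidableEq V]
    (F : Finset (Finset V))
    (A B : {X : Finset V // X ∈ F})
    (hAB : Overlaps (A : Finset V) (B : Finset V))
    (hcard : (A : Finset V).card ≤ (B : Finset V).card)
    (v : V) (hvA : v ∈ (A : Finset V)) (hvB : v ∈ (B : Finset V))
    (Y : {X : Finset V // X ∈ F}) (hvY : v ∈ (Y : Finset V))
    (h1 : (A : Finset V).card ≤ (Y : Finset V).card)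
    (h2 : (Y : Finset V).card ≤ (B : Finset V).card) :
    (OG F).Reachable A B ∧ (OG F).Reachable A Y ∧ (OG F).Reachable B Y := by
  have hadjAB : (OG F).Adj A B := hAB
  have hrAB := hadjAB.reachable
  refine ⟨hrAB, ?_⟩
  -- key lemma: non-overlap + common point ⇒ containment
  have key : ∀ X Z : Finset V, v ∈ X → v ∈ Z → ¬ Overlaps X Z → X ⊆ Z ∨ Z ⊆ X := by
    intro X Z hvX hvZ h
    unfold Overlaps at h
    push_neg at h
    rcases Finset.eq_empty_or_nonempty (X \ Z) with he | hne
    · exact Or.inl (fun x hx => by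
        by_contra hxz
        exact absurd (Finset.mem_sdiff.mpr ⟨hx, hxz⟩) (by simp [he]))
    · have := h ⟨v, Finset.mem_inter.mpr ⟨hvX, hvZ⟩⟩ hne
      rcases Finset.eq_empty_or_nonempty (Z \ X) with he2 | hne2
      · exact Or.inr (fun x hx => by
          by_contra hxz
          exact absurd (Finset.mem_sdiff.mpr ⟨hx, hxz⟩) (by simp [he2]))
      · exact absurd hne2 (Finset.not_nonempty_iff_eq_empty.mpr this)
  by_cases hYA : Y = A
  · subst hYA; exact ⟨SimpleGraph.Reachable.refl _, hrAB.symm⟩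
  by_cases hYB : Y = B
  · subst hYB; exact ⟨hrAB, SimpleGraph.Reachable.refl _⟩
  by_cases hOA : Overlaps (A : Finset V) (Y : Finset V)
  · have hr : (OG F).Reachable A Y := SimpleGraph.Adj.reachable (by exact hOA)
    exact ⟨hr, hrAB.symm.trans hr⟩
  by_cases hOB : Overlaps (B : Finset V) (Y : Finset V)
  · have hr : (OG F).Reachable B Y := SimpleGraph.Adj.reachable (by exact hOB)
    exact ⟨hrAB.trans hr, hr⟩
  -- derive contradiction
  exfalso
  have hAY : (A : Finset V) ⊆ Y := by
    rcases key A Y hvA hvY hOA with h | h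
    · exact h
    · exact absurd (Finset.eq_of_subset_of_card_le h h1) (by
        intro he; exact hYA (Subtype.ext he))
  have hYB' : (Y : Finset V) ⊆ B := by
    rcases key B Y hvB hvY hOB with h | h
    · exact absurd (Finset.eq_of_subset_of_card_le h h2)
        (fun he => hYB (Subtype.ext (he.symm)))
    · exact h
  obtain ⟨x, hx⟩ := hAB.2.1
  rw [Finset.mem_sdiff] at hx
  exact hx.2 (hYB' (hAY hx.1))
end

section
/- Fix an LF order ≼ on F and a lex column order ≤ on V. Let X, Y ∈ F be such that Y overlaps X. Then there exists Z ∈ F with Z ≼ Y such that left(X) ∉ Z and right(X) ∈ Z. -/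
/-- Fix an LF order `lo` on `F` and a lex column order `lv` on `V`.
If `Y` overlaps `X`, then there exists `Z ∈ F` with `Z ≼ Y` such that
`left(X) ∉ Z` and `right(X) ∈ Z` (where `left(X)`/`right(X)` are the
`lv`-minimum/maximum of `X`). -/
theorem stmt7 {V : Type*} [Fintype V] [DecidableEq V]
    (F : Finset (Finset V))
    (lo : LinearOrder {X : Finset V // X ∈ F})
    (hLF : ∀ A B : {X : Finset V // X ∈ F},
      (B : Finset V).card < (A : Finset V).card → lo.lt A B)
    (lv : LinearOrder V)
    (hlex : ∀ v w : V, lv.lt v w →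
      ∀ Z : {X : Finset V // X ∈ F},
        ¬(v ∈ (Z : Finset V) ↔ w ∈ (Z : Finset V)) →
        (∀ Z' : {X : Finset V // X ∈ F}, lo.lt Z' Z →
          (v ∈ (Z' : Finset V) ↔ w ∈ (Z' : Finset V))) →
        v ∉ (Z : Finset V) ∧ w ∈ (Z : Finset V))
    (X Y : {X : Finset V // X ∈ F})
    (hover : Overlaps (Y : Finset V) (X : Finset V))
    (l r : V)
    (hl : l ∈ (X : Finset V) ∧ ∀ u ∈ (X : Finset V), lv.le l u)
    (hr : r ∈ (X : Finset V) ∧ ∀ u ∈ (X : Finset V), lv.le u r) :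
    ∃ Z : {X : Finset V // X ∈ F}, lo.le Z Y ∧
      l ∉ (Z : Finset V) ∧ r ∈ (Z : Finset V) := by
  classical
  -- helper: a minimal disagreement set exists and satisfies the lex condition
  have hmin : ∀ v w : V, lv.lt v w →
      ∀ W : {X : Finset V // X ∈ F}, ¬(v ∈ (W : Finset V) ↔ w ∈ (W : Finset V)) →
      ∃ Z : {X : Finset V // X ∈ F},
        v ∉ (Z : Finset V) ∧ w ∈ (Z : Finset V) ∧
        ∀ Z' : {X : Finset V // X ∈ F},
          ¬(v ∈ (Z' : Finset V) ↔ w ∈ (Z' : Finset V)) → lo.le Z Z' := by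
    intro v w hvw W hW
    set T : Finset {X : Finset V // X ∈ F} :=
      Finset.univ.filter (fun Z => ¬(v ∈ (Z : Finset V) ↔ w ∈ (Z : Finset V))) with hT
    have hTne : T.Nonempty := ⟨W, by simp [hT, hW]⟩
    obtain ⟨Z, hZT, hZmin⟩ := @Finset.exists_min_image _ _ lo T id hTne
    have hZdis : ¬(v ∈ (Z : Finset V) ↔ w ∈ (Z : Finset V)) := by
      simpa [hT] using hZT
    have hprev : ∀ Z' : {X : Finset V // X ∈ F}, lo.lt Z' Z →
        (v ∈ (Z' : Finset V) ↔ w ∈ (Z' : Finset V)) := by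
      intro Z' hZ'
      by_contra hdis
      have hmem : Z' ∈ T := by simp [hT, hdis]
      exact (@not_lt _ lo _ _).2 (hZmin Z' hmem) hZ'
    obtain ⟨h1, h2⟩ := hlex v w hvw Z hZdis hprev
    exact ⟨Z, h1, h2, fun Z' hdis => hZmin Z' (by simp [hT, hdis])⟩
  have hlr_le : lv.le l r := hl.2 r hr.1
  by_cases hS : ∃ Z : {X : Finset V // X ∈ F}, lo.le Z Y ∧
      ¬(l ∈ (Z : Finset V) ↔ r ∈ (Z : Finset V))
  · obtain ⟨W, hWY, hWdis⟩ := hS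
    have hne : l ≠ r := by
      intro h; exact hWdis (by rw [h])
    have hlr : lv.lt l r := (@lt_iff_le_and_ne _ lv.toPartialOrder _ _).mpr ⟨hlr_le, hne⟩
    obtain ⟨Z, h1, h2, h3⟩ := hmin l r hlr W hWdis
    exact ⟨Z, lo.le_trans _ _ _ (h3 W hWdis) hWY, h1, h2⟩
  · -- l and r agree on all Z ≼ Y; derive a contradiction from the overlap
    exfalso
    push_neg at hS
    have hagree : ∀ Z : {X : Finset V // X ∈ F}, lo.le Z Y →
        (l ∈ (Z : Finset V) ↔ r ∈ (Z : Finset V)) := by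
      exact hS
    -- every element of X agrees with r at Y
    have key : ∀ v ∈ (X : Finset V), (v ∈ (Y : Finset V) ↔ r ∈ (Y : Finset V)) := by
      intro v hv
      by_contra hdisY
      have hvr : v ≠ r := by intro h; exact hdisY (by rw [h])
      have hlv : l ≠ v := by
        intro h
        exact hdisY (by rw [← h]; exact hagree Y (lo.le_refl Y))
      have hlv' : lv.lt l v := (@lt_iff_le_and_ne _ lv.toPartialOrder _ _).mpr ⟨hl.2 v hv, hlv⟩
      have hvr' : lv.lt v r := (@lt_iff_le_and_ne _ lv.toPartialOrder _ _).mpr ⟨hr.2 v hv, hvr⟩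
      -- l and v disagree at Y, since l and r agree at Y
      have hdisY' : ¬(l ∈ (Y : Finset V) ↔ v ∈ (Y : Finset V)) := by
        intro h
        exact hdisY (h.symm.trans (hagree Y (lo.le_refl Y)))
      obtain ⟨Z1, hZ1l, hZ1v, hZ1min⟩ := hmin l v hlv' Y hdisY'
      obtain ⟨Z2, hZ2v, hZ2r, hZ2min⟩ := hmin v r hvr' Y hdisY
      have hZ1Y : lo.le Z1 Y := hZ1min Y hdisY'
      have hZ2Y : lo.le Z2 Y := hZ2min Y hdisY
      -- l ∉ Z1 so r ∉ Z1, but v ∈ Z1: v,r disagree at Z1, so Z2 ≤ Z1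
      have hrZ1 : r ∉ (Z1 : Finset V) := fun h => hZ1l ((hagree Z1 hZ1Y).mpr h)
      have h21 : lo.le Z2 Z1 := hZ2min Z1 (by
        intro h; exact hrZ1 (h.mp hZ1v))
      -- r ∈ Z2 so l ∈ Z2, but v ∉ Z2: l,v disagree at Z2, so Z1 ≤ Z2
      have hlZ2 : l ∈ (Z2 : Finset V) := (hagree Z2 hZ2Y).mpr hZ2r
      have h12 : lo.le Z1 Z2 := hZ1min Z2 (by
        intro h; exact hZ2v (h.mp hlZ2))
      have : Z1 = Z2 := lo.le_antisymm _ _ h12 h21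
      exact hZ2v (this ▸ hZ1v)
    obtain ⟨hYX, _, hXY⟩ := hover
    obtain ⟨a, ha⟩ := hYX
    obtain ⟨b, hb⟩ := hXY
    rw [Finset.mem_inter] at ha
    rw [Finset.mem_sdiff] at hb
    have hra : r ∈ (Y : Finset V) := (key a ha.2).mp ha.1
    exact hb.2 ((key b hb.1).mpr hra)
end

section
/- Fix an LF order ≼ on F and a lex column order ≤ on V, and let X ∈ F be nonempty. Then Max(X) is defined if and only if there exists a set Y ∈ F with |Y| ≥ |X| such that left(X) ∉ Y and right(X) ∈ Y. -/
/-- Fix an LF order `lo` on `F` and a lex column order `lv` on `V`, and let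
`X ∈ F` be nonempty. Then `Max(X)` is defined (some set of `F` of size `≥ |X|`
overlaps `X`) iff there exists `Y ∈ F` with `|Y| ≥ |X|`, `left(X) ∉ Y` and
`right(X) ∈ Y`. -/
theorem stmt8 {V : Type*} [Fintype V] [DecidableEq V]
    (F : Finset (Finset V))
    (lo : LinearOrder {X : Finset V // X ∈ F})
    (hLF : ∀ A B : {X : Finset V // X ∈ F},
      (B : Finset V).card < (A : Finset V).card → lo.lt A B)
    (lv : LinearOrder V)
    (hlex : ∀ v w : V, lv.lt v w →
      ∀ Z : {X : Finset V // X ∈ F},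
        ¬(v ∈ (Z : Finset V) ↔ w ∈ (Z : Finset V)) →
        (∀ Z' : {X : Finset V // X ∈ F}, lo.lt Z' Z →
          (v ∈ (Z' : Finset V) ↔ w ∈ (Z' : Finset V))) →
        v ∉ (Z : Finset V) ∧ w ∈ (Z : Finset V))
    (X : {X : Finset V // X ∈ F}) (hXne : (X : Finset V).Nonempty)
    (l r : V)
    (hl : l ∈ (X : Finset V) ∧ ∀ u ∈ (X : Finset V), lv.le l u)
    (hr : r ∈ (X : Finset V) ∧ ∀ u ∈ (X : Finset V), lv.le u r) :
    (∃ M : {X : Finset V // X ∈ F},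
        (X : Finset V).card ≤ (M : Finset V).card ∧
        Overlaps (M : Finset V) (X : Finset V)) ↔
    (∃ Y : {X : Finset V // X ∈ F},
        (X : Finset V).card ≤ (Y : Finset V).card ∧
        l ∉ (Y : Finset V) ∧ r ∈ (Y : Finset V)) := by
  classical
  letI := lv
  constructor
  · rintro ⟨M, hMc, hMX⟩
    obtain ⟨b, hb⟩ := hMX.1
    obtain ⟨a, ha⟩ := hMX.2.2
    rw [Finset.mem_inter] at hb
    rw [Finset.mem_sdiff] at ha
    set P : {X : Finset V // X ∈ F} → Prop :=
      fun Z => ∃ u ∈ (X : Finset V), ∃ v ∈ (X : Finset V),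
        u ∈ (Z : Finset V) ∧ v ∉ (Z : Finset V) with hP
    have hMP : P M := ⟨b, hb.2, a, ha.1, hb.1, ha.2⟩
    set S : Finset {X : Finset V // X ∈ F} := Finset.univ.filter P with hS
    have hMS : M ∈ S := by simp [hS, hMP]
    have hSne : S.Nonempty := ⟨M, hMS⟩
    set Z₀ := @Finset.min' _ lo S hSne with hZ₀
    have hZ₀S : Z₀ ∈ S := @Finset.min'_mem _ lo S hSne
    have hZ₀P : P Z₀ := by simpa [hS] using hZ₀S
    have hmin : ∀ z ∈ S, lo.le Z₀ z := fun z hz => @Finset.min'_le _ lo S z hz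
    -- card bound
    have hcard : (X : Finset V).card ≤ (Z₀ : Finset V).card := by
      by_contra h
      push_neg at h
      have : lo.lt M Z₀ := hLF M Z₀ (lt_of_lt_of_le h hMc)
      exact ((@lt_iff_le_not_ge _ lo.toPreorder M Z₀).mp this).2 (hmin M hMS)
    -- sets below Z₀ don't separate pairs of X
    have hprior : ∀ Z' : {X : Finset V // X ∈ F}, lo.lt Z' Z₀ →
        ∀ u ∈ (X : Finset V), ∀ v ∈ (X : Finset V),
          (u ∈ (Z' : Finset V) ↔ v ∈ (Z' : Finset V)) := by
      intro Z' hZ' u hu v hv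
      by_contra hiff
      have hZ'S : Z' ∈ S := by
        simp only [hS, Finset.mem_filter, Finset.mem_univ, true_and]
        by_cases huz : u ∈ (Z' : Finset V)
        · exact ⟨u, hu, v, hv, huz, fun hvz => hiff ⟨fun _ => hvz, fun _ => huz⟩⟩
        · refine ⟨v, hv, u, hu, ?_, huz⟩
          by_contra hvz
          exact hiff ⟨fun h => absurd h huz, fun h => absurd h hvz⟩
      exact ((@lt_iff_le_not_ge _ lo.toPreorder Z' Z₀).mp hZ').2 (hmin Z' hZ'S)
    obtain ⟨u, hu, v, hv, huZ, hvZ⟩ := hZ₀P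
    have hlZ : l ∉ (Z₀ : Finset V) := by
      intro hlZ
      have hne : l ≠ v := fun h => hvZ (h ▸ hlZ)
      have hlt : lv.lt l v := lt_of_le_of_ne (hl.2 v hv) hne
      have := hlex l v hlt Z₀
        (fun h => hvZ (h.mp hlZ))
        (fun Z' hZ' => hprior Z' hZ' l hl.1 v hv)
      exact this.1 hlZ
    have hrZ : r ∈ (Z₀ : Finset V) := by
      by_contra hrZ
      have hne : u ≠ r := fun h => hrZ (h ▸ huZ)
      have hlt : lv.lt u r := lt_of_le_of_ne (hr.2 u hu) hne
      have := hlex u r hlt Z₀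
        (fun h => hrZ (h.mp huZ))
        (fun Z' hZ' => hprior Z' hZ' u hu r hr.1)
      exact absurd huZ this.1
    exact ⟨Z₀, hcard, hlZ, hrZ⟩
  · rintro ⟨Y, hYc, hlY, hrY⟩
    refine ⟨Y, hYc, ⟨r, Finset.mem_inter.mpr ⟨hrY, hr.1⟩⟩,
      ?_, ⟨l, Finset.mem_sdiff.mpr ⟨hl.1, hlY⟩⟩⟩
    by_contra hne
    rw [Finset.not_nonempty_iff_eq_empty, Finset.sdiff_eq_empty_iff_subset] at hne
    have hsub : (Y : Finset V) ⊆ (X : Finset V).erase l := by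
      intro y hy
      exact Finset.mem_erase.mpr ⟨fun h => hlY (h ▸ hy), hne hy⟩
    have h1 : (Y : Finset V).card ≤ (X : Finset V).card - 1 := by
      simpa [Finset.card_erase_of_mem hl.1] using Finset.card_le_card hsub
    have h2 : (X : Finset V).card - 1 < (X : Finset V).card :=
      Nat.sub_lt (Finset.card_pos.mpr hXne) one_pos
    omega
end

section
/- Fix an LF order ≼ on F and a lex column order ≤ on V, and let X ∈ F be nonempty with Max(X) defined. Then Max(X) is the ≼-least set Y ∈ F satisfying left(X) ∉ Y and right(X) ∈ Y (i.e., Max(X) corresponds to the highest row t of the matrix with a 0 in column left(X) and a 1 in column right(X)). -/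
/-- Fix an LF order `lo` on `F` and a lex column order `lv` on `V`, and let
`X ∈ F` be nonempty with `Max(X)` defined (here `M`). Then `Max(X)` is the
`≼`-least set `Y ∈ F` satisfying `left(X) ∉ Y` and `right(X) ∈ Y`. -/
theorem stmt9 {V : Type*} [Fintype V] [DecidableEq V]
    (F : Finset (Finset V))
    (lo : LinearOrder {X : Finset V // X ∈ F})
    (hLF : ∀ A B : {X : Finset V // X ∈ F},
      (B : Finset V).card < (A : Finset V).card → lo.lt A B)
    (lv : LinearOrder V)
    (hlex : ∀ v w : V, lv.lt v w →
      ∀ Z : {X : Finset V // X ∈ F},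
        ¬(v ∈ (Z : Finset V) ↔ w ∈ (Z : Finset V)) →
        (∀ Z' : {X : Finset V // X ∈ F}, lo.lt Z' Z →
          (v ∈ (Z' : Finset V) ↔ w ∈ (Z' : Finset V))) →
        v ∉ (Z : Finset V) ∧ w ∈ (Z : Finset V))
    (X : {X : Finset V // X ∈ F}) (hXne : (X : Finset V).Nonempty)
    (l r : V)
    (hl : l ∈ (X : Finset V) ∧ ∀ u ∈ (X : Finset V), lv.le l u)
    (hr : r ∈ (X : Finset V) ∧ ∀ u ∈ (X : Finset V), lv.le u r)
    (M : {X : Finset V // X ∈ F})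
    (hMover : Overlaps (M : Finset V) (X : Finset V))
    (hMcard : (X : Finset V).card ≤ (M : Finset V).card)
    (hMleast : ∀ Z : {X : Finset V // X ∈ F},
      (X : Finset V).card ≤ (Z : Finset V).card →
      Overlaps (Z : Finset V) (X : Finset V) → lo.le M Z) :
    l ∉ (M : Finset V) ∧ r ∈ (M : Finset V) ∧
    ∀ Y : {X : Finset V // X ∈ F},
      l ∉ (Y : Finset V) → r ∈ (Y : Finset V) → lo.le M Y := by
  classical
  letI := lv
  have Tr : ∀ a b c : {X : Finset V // X ∈ F}, lo.lt a b → lo.lt b c → lo.lt a c :=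
    fun a b c => @lt_trans _ lo.toPartialOrder.toPreorder a b c
  have A : ∀ a b : {X : Finset V // X ∈ F}, lo.lt a b → ¬ lo.lt b a :=
    fun a b => @lt_asymm _ lo.toPartialOrder.toPreorder a b
  have NLE : ∀ a b : {X : Finset V // X ∈ F}, lo.lt a b → ¬ lo.le b a :=
    fun a b => @not_le_of_gt _ lo.toPartialOrder.toPreorder a b
  have LN : ∀ a b : {X : Finset V // X ∈ F}, ¬ lo.le a b → lo.lt b a :=
    fun a b => @lt_of_not_ge _ lo b a
  -- Any set strictly before M has cardinality at least |X|.
  have hcard : ∀ Z : {X : Finset V // X ∈ F}, lo.lt Z M →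
      (X : Finset V).card ≤ (Z : Finset V).card := by
    intro Z hZ
    have h1 : ¬ (Z : Finset V).card < (M : Finset V).card := by
      intro h
      exact absurd (hLF M Z h) (A _ _ hZ)
    omega
  -- All elements of X agree on membership in every set strictly before M.
  have agree : ∀ Z : {X : Finset V // X ∈ F}, lo.lt Z M →
      ∀ v ∈ (X : Finset V), ∀ w ∈ (X : Finset V),
        (v ∈ (Z : Finset V) ↔ w ∈ (Z : Finset V)) := by
    by_contra hbad
    push_neg at hbad
    set S : Finset {X : Finset V // X ∈ F} :=
      Finset.univ.filter (fun Z => lo.lt Z M ∧ ∃ v ∈ (X : Finset V),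
        ∃ w ∈ (X : Finset V), ¬ (v ∈ (Z : Finset V) ↔ w ∈ (Z : Finset V))) with hS
    obtain ⟨Z₀, hZ₀M, v, hvX, w, hwX, hvw⟩ := hbad
    have hvw' : ¬ (v ∈ (Z₀ : Finset V) ↔ w ∈ (Z₀ : Finset V)) := by tauto
    have hSne : S.Nonempty := by
      refine ⟨Z₀, ?_⟩
      simp only [hS, Finset.mem_filter, Finset.mem_univ, true_and]
      exact ⟨hZ₀M, v, hvX, w, hwX, hvw'⟩
    obtain ⟨Z, hZS, hZmin⟩ := @Finset.exists_min_image _ _ lo S id hSne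
    simp only [hS, Finset.mem_filter, Finset.mem_univ, true_and] at hZS
    obtain ⟨hZM, a, haX, b, hbX, hab⟩ := hZS
    have key : ∀ p q : V, p ∈ (X : Finset V) → q ∈ (X : Finset V) →
        lv.lt p q → ¬ (p ∈ (Z : Finset V) ↔ q ∈ (Z : Finset V)) → False := by
      intro p q hpX hqX hpq hne
      have hprev : ∀ Z' : {X : Finset V // X ∈ F}, lo.lt Z' Z →
          (p ∈ (Z' : Finset V) ↔ q ∈ (Z' : Finset V)) := by
        intro Z' hZ'
        by_contra hne'
        have hZ'S : Z' ∈ S := by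
          simp only [hS, Finset.mem_filter, Finset.mem_univ, true_and]
          exact ⟨Tr _ _ _ hZ' hZM, p, hpX, q, hqX, hne'⟩
        exact NLE _ _ hZ' (hZmin Z' hZ'S)
      obtain ⟨hpZ, hqZ⟩ := hlex p q hpq Z hne hprev
      by_cases hsub : (Z : Finset V) ⊆ (X : Finset V)
      · have h2 : (X : Finset V).card ≤ (Z : Finset V).card := hcard Z hZM
        have : (Z : Finset V) = (X : Finset V) :=
          Finset.eq_of_subset_of_card_le hsub h2
        exact hpZ (this ▸ hpX)
      · obtain ⟨u, huZ, huX⟩ := Finset.not_subset.mp hsub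
        have hov : Overlaps (Z : Finset V) (X : Finset V) :=
          ⟨⟨q, Finset.mem_inter.mpr ⟨hqZ, hqX⟩⟩,
           ⟨u, Finset.mem_sdiff.mpr ⟨huZ, huX⟩⟩,
           ⟨p, Finset.mem_sdiff.mpr ⟨hpX, hpZ⟩⟩⟩
        exact NLE _ _ hZM (hMleast Z (hcard Z hZM) hov)
    have hane : a ≠ b := by rintro rfl; exact hab Iff.rfl
    rcases lt_or_gt_of_ne hane with h | h
    · exact key a b haX hbX h hab
    · exact key b a hbX haX h (fun hi => hab hi.symm)
  -- Elements of X \ M are lv-smaller than elements of X ∩ M.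
  have sep : ∀ p ∈ (X : Finset V), ∀ q ∈ (X : Finset V),
      p ∉ (M : Finset V) → q ∈ (M : Finset V) → lv.lt p q := by
    intro p hpX q hqX hpM hqM
    have hne : p ≠ q := fun h => hpM (h ▸ hqM)
    rcases lt_or_gt_of_ne hne with h | h
    · exact h
    · have hdiff : ¬ (q ∈ (M : Finset V) ↔ p ∈ (M : Finset V)) := by
        intro hi; exact hpM (hi.mp hqM)
      have hprev : ∀ Z' : {X : Finset V // X ∈ F}, lo.lt Z' M →
          (q ∈ (Z' : Finset V) ↔ p ∈ (Z' : Finset V)) := fun Z' hZ' =>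
        agree Z' hZ' q hqX p hpX
      exact absurd hqM (hlex q p h M hdiff hprev).1
  obtain ⟨hMX, hMnX, hXnM⟩ := hMover
  obtain ⟨a, ha⟩ := hMX
  obtain ⟨b, hb⟩ := hXnM
  rw [Finset.mem_inter] at ha
  rw [Finset.mem_sdiff] at hb
  have hlM : l ∉ (M : Finset V) := by
    intro hlM
    have := sep b hb.1 l hl.1 hb.2 hlM
    exact absurd (hl.2 b hb.1) (not_le_of_gt this)
  have hrM : r ∈ (M : Finset V) := by
    by_contra hrM
    have := sep r hr.1 a ha.2 hrM ha.1
    exact absurd (hr.2 a ha.2) (not_le_of_gt this)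
  refine ⟨hlM, hrM, fun Y hlY hrY => ?_⟩
  by_contra hYM
  have hYM' : lo.lt Y M := LN _ _ hYM
  exact hlY ((agree Y hYM' l hl.1 r hr.1).mpr hrY)
end

section
/- Fix an LF order ≼ on F and a lex column order ≤ on V, and let X ∈ F be nonempty. Suppose the set S = {Y ∈ F : left(X) ∉ Y and right(X) ∈ Y} is nonempty and let Y₀ be the ≼-least element of S. If |Y₀| ≥ |X| then Max(X) is defined and Max(X) = Y₀; if |Y₀| < |X| then Max(X) is undefined. Moreover, if S is empty then Max(X) is undefined. -/
/-- Fix an LF order `lo` on `F` and a lex column order `lv` on `V`, and let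
`X ∈ F` be nonempty. Consider `S = {Y ∈ F : left(X) ∉ Y ∧ right(X) ∈ Y}`.
If `S` is nonempty with `≼`-least element `Y₀`, then: if `|Y₀| ≥ |X|`, `Max(X)`
is defined and equals `Y₀`; if `|Y₀| < |X|`, `Max(X)` is undefined.
Moreover if `S` is empty then `Max(X)` is undefined. -/
theorem stmt10 {V : Type*} [Fintype V] [DecidableEq V]
    (F : Finset (Finset V))
    (lo : LinearOrder {X : Finset V // X ∈ F})
    (hLF : ∀ A B : {X : Finset V // X ∈ F},
      (B : Finset V).card < (A : Finset V).card → lo.lt A B)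
    (lv : LinearOrder V)
    (hlex : ∀ v w : V, lv.lt v w →
      ∀ Z : {X : Finset V // X ∈ F},
        ¬(v ∈ (Z : Finset V) ↔ w ∈ (Z : Finset V)) →
        (∀ Z' : {X : Finset V // X ∈ F}, lo.lt Z' Z →
          (v ∈ (Z' : Finset V) ↔ w ∈ (Z' : Finset V))) →
        v ∉ (Z : Finset V) ∧ w ∈ (Z : Finset V))
    (X : {X : Finset V // X ∈ F}) (hXne : (X : Finset V).Nonempty)
    (l r : V)
    (hl : l ∈ (X : Finset V) ∧ ∀ u ∈ (X : Finset V), lv.le l u)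
    (hr : r ∈ (X : Finset V) ∧ ∀ u ∈ (X : Finset V), lv.le u r) :
    (∀ Y₀ : {X : Finset V // X ∈ F},
      l ∉ (Y₀ : Finset V) → r ∈ (Y₀ : Finset V) →
      (∀ Z : {X : Finset V // X ∈ F},
        l ∉ (Z : Finset V) → r ∈ (Z : Finset V) → lo.le Y₀ Z) →
      (((X : Finset V).card ≤ (Y₀ : Finset V).card →
          Overlaps (Y₀ : Finset V) (X : Finset V) ∧
          (∀ Z : {X : Finset V // X ∈ F},
            (X : Finset V).card ≤ (Z : Finset V).card →
            Overlaps (Z : Finset V) (X : Finset V) → lo.le Y₀ Z)) ∧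
        ((Y₀ : Finset V).card < (X : Finset V).card →
          ¬∃ M : {X : Finset V // X ∈ F},
            (X : Finset V).card ≤ (M : Finset V).card ∧
            Overlaps (M : Finset V) (X : Finset V)))) ∧
    ((¬∃ Y : {X : Finset V // X ∈ F},
        l ∉ (Y : Finset V) ∧ r ∈ (Y : Finset V)) →
      ¬∃ M : {X : Finset V // X ∈ F},
        (X : Finset V).card ≤ (M : Finset V).card ∧
        Overlaps (M : Finset V) (X : Finset V)) := by
  classical
  letI := lv
  obtain ⟨hlX, hlmin⟩ := hl
  obtain ⟨hrX, hrmax⟩ := hr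
  -- basic order facts for lo, stated explicitly to avoid instance clashes
  have loAsymm : ∀ {A B : {X : Finset V // X ∈ F}}, lo.lt A B → lo.lt B A → False :=
    fun h1 h2 => ((lo.lt_iff_le_not_ge _ _).mp h1).2 ((lo.lt_iff_le_not_ge _ _).mp h2).1
  have loNotLe : ∀ {A B : {X : Finset V // X ∈ F}}, lo.lt A B → ¬ lo.le B A :=
    fun h => ((lo.lt_iff_le_not_ge _ _).mp h).2
  have loLtOfLeOfNe : ∀ {A B : {X : Finset V // X ∈ F}}, lo.le A B → A ≠ B → lo.lt A B :=
    fun h hne => (lo.lt_iff_le_not_ge _ _).mpr ⟨h, fun h2 => hne (lo.le_antisymm _ _ h h2)⟩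
  -- first differing set of a pair
  have first_diff : ∀ v w : V, lv.lt v w → ∀ Z₀ : {X : Finset V // X ∈ F},
      v ∈ (Z₀ : Finset V) → w ∉ (Z₀ : Finset V) →
      ∃ W : {X : Finset V // X ∈ F},
        v ∉ (W : Finset V) ∧ w ∈ (W : Finset V) ∧ lo.lt W Z₀ := by
    intro v w hvw Z₀ hv hw
    set D : Finset {X : Finset V // X ∈ F} :=
      Finset.univ.filter (fun Z => ¬(v ∈ (Z : Finset V) ↔ w ∈ (Z : Finset V))) with hD
    have hZ₀D : Z₀ ∈ D := by
      simp only [hD, Finset.mem_filter, Finset.mem_univ, true_and]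
      tauto
    have hDne : D.Nonempty := ⟨Z₀, hZ₀D⟩
    set W := @Finset.min' _ lo D hDne with hW
    have hWD : W ∈ D := @Finset.min'_mem _ lo D hDne
    have hWdiff : ¬(v ∈ (W : Finset V) ↔ w ∈ (W : Finset V)) := by
      simpa only [hD, Finset.mem_filter, Finset.mem_univ, true_and] using hWD
    have h1 := hlex v w hvw W hWdiff (fun Z' hZ' => by
      by_contra hcon
      have hmem : Z' ∈ D := by
        simp only [hD, Finset.mem_filter, Finset.mem_univ, true_and]
        exact hcon
      exact loNotLe hZ' (@Finset.min'_le _ lo D Z' hmem))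
    refine ⟨W, h1.1, h1.2, ?_⟩
    have hle : lo.le W Z₀ := @Finset.min'_le _ lo D Z₀ hZ₀D
    exact loLtOfLeOfNe hle (fun h => (h ▸ h1.1) hv)
  -- key: a lo-minimal large overlapping set misses l and contains r
  have key : ∀ M : {X : Finset V // X ∈ F},
      (X : Finset V).card ≤ (M : Finset V).card →
      Overlaps (M : Finset V) (X : Finset V) →
      (∀ W : {X : Finset V // X ∈ F}, lo.lt W M →
        ¬ Overlaps (W : Finset V) (X : Finset V)) →
      l ∉ (M : Finset V) ∧ r ∈ (M : Finset V) := by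
    intro M hcard hov hmin
    obtain ⟨⟨a, ha⟩, ⟨c, hc⟩, ⟨b, hb⟩⟩ := hov
    rw [Finset.mem_inter] at ha
    rw [Finset.mem_sdiff] at hb hc
    have cardWX : ∀ W : {X : Finset V // X ∈ F}, lo.lt W M →
        (W : Finset V) ⊆ (X : Finset V) → (W : Finset V) = (X : Finset V) := by
      intro W hWM hsub
      have hMW : (M : Finset V).card ≤ (W : Finset V).card := by
        by_contra h
        exact loAsymm hWM (hLF M W (not_le.mp h))
      exact Finset.eq_of_subset_of_card_le hsub (le_trans hcard hMW)
    constructor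
    · -- l ∉ M
      intro hlM
      have hlb : lv.lt l b :=
        lt_of_le_of_ne (hlmin b hb.1) (by rintro rfl; exact hb.2 hlM)
      obtain ⟨W, hlW, hbW, hWM⟩ := first_diff l b hlb M hlM hb.2
      have hno := hmin W hWM
      have hsub : (W : Finset V) ⊆ (X : Finset V) := by
        intro x hx
        by_contra hx'
        exact hno ⟨⟨b, Finset.mem_inter.mpr ⟨hbW, hb.1⟩⟩,
          ⟨x, Finset.mem_sdiff.mpr ⟨hx, hx'⟩⟩,
          ⟨l, Finset.mem_sdiff.mpr ⟨hlX, hlW⟩⟩⟩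
      have hWX := cardWX W hWM hsub
      exact hlW (hWX ▸ hlX)
    · -- r ∈ M
      by_contra hrM
      have har : lv.lt a r :=
        lt_of_le_of_ne (hrmax a ha.2) (by rintro rfl; exact hrM ha.1)
      obtain ⟨W, haW, hrW, hWM⟩ := first_diff a r har M ha.1 hrM
      have hno := hmin W hWM
      have hsub : (W : Finset V) ⊆ (X : Finset V) := by
        intro x hx
        by_contra hx'
        exact hno ⟨⟨r, Finset.mem_inter.mpr ⟨hrW, hrX⟩⟩,
          ⟨x, Finset.mem_sdiff.mpr ⟨hx, hx'⟩⟩,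
          ⟨a, Finset.mem_sdiff.mpr ⟨ha.2, haW⟩⟩⟩
      have hWX := cardWX W hWM hsub
      exact haW (hWX ▸ ha.2)
  -- extract a lo-minimal large overlapping set whenever one exists
  have getmin : (∃ M : {X : Finset V // X ∈ F},
        (X : Finset V).card ≤ (M : Finset V).card ∧
        Overlaps (M : Finset V) (X : Finset V)) →
      ∃ M : {X : Finset V // X ∈ F},
        l ∉ (M : Finset V) ∧ r ∈ (M : Finset V) ∧
        (X : Finset V).card ≤ (M : Finset V).card ∧
        (∀ Z : {X : Finset V // X ∈ F},
          (X : Finset V).card ≤ (Z : Finset V).card →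
          Overlaps (Z : Finset V) (X : Finset V) → lo.le M Z) := by
    rintro ⟨M', hM'⟩
    set O : Finset {X : Finset V // X ∈ F} :=
      Finset.univ.filter (fun Z => (X : Finset V).card ≤ (Z : Finset V).card ∧
        Overlaps (Z : Finset V) (X : Finset V)) with hO
    have hmemO : ∀ Z : {X : Finset V // X ∈ F}, Z ∈ O ↔
        ((X : Finset V).card ≤ (Z : Finset V).card ∧
          Overlaps (Z : Finset V) (X : Finset V)) := by
      intro Z
      simp only [hO, Finset.mem_filter, Finset.mem_univ, true_and]
    have hOne : O.Nonempty := ⟨M', (hmemO M').mpr hM'⟩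
    set M := @Finset.min' _ lo O hOne with hM
    obtain ⟨hMc, hMov⟩ := (hmemO M).mp (@Finset.min'_mem _ lo O hOne)
    have hminW : ∀ W : {X : Finset V // X ∈ F}, lo.lt W M →
        ¬ Overlaps (W : Finset V) (X : Finset V) := by
      intro W hWM hov
      have hcardW : (X : Finset V).card ≤ (W : Finset V).card := by
        by_contra h
        exact loAsymm hWM (hLF M W (lt_of_lt_of_le (not_le.mp h) hMc))
      exact loNotLe hWM (@Finset.min'_le _ lo O W ((hmemO W).mpr ⟨hcardW, hov⟩))
    obtain ⟨h1, h2⟩ := key M hMc hMov hminW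
    exact ⟨M, h1, h2, hMc,
      fun Z hZc hZo => @Finset.min'_le _ lo O Z ((hmemO Z).mpr ⟨hZc, hZo⟩)⟩
  constructor
  · intro Y₀ hlY hrY hYmin
    constructor
    · intro hc
      constructor
      · refine ⟨⟨r, Finset.mem_inter.mpr ⟨hrY, hrX⟩⟩, ?_,
          ⟨l, Finset.mem_sdiff.mpr ⟨hlX, hlY⟩⟩⟩
        by_contra h
        have hsub : (Y₀ : Finset V) ⊆ (X : Finset V) := by
          intro x hx
          by_contra hx'
          exact h ⟨x, Finset.mem_sdiff.mpr ⟨hx, hx'⟩⟩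
        have heq := Finset.eq_of_subset_of_card_le hsub hc
        exact hlY (heq ▸ hlX)
      · intro Z hZc hZo
        obtain ⟨M, h1, h2, _, hMle⟩ := getmin ⟨Z, hZc, hZo⟩
        exact lo.le_trans _ _ _ (hYmin M h1 h2) (hMle Z hZc hZo)
    · rintro hc ⟨M', hM'⟩
      obtain ⟨M, h1, h2, hMc, _⟩ := getmin ⟨M', hM'⟩
      exact loNotLe (hLF M Y₀ (lt_of_lt_of_le hc hMc)) (hYmin M h1 h2)
  · rintro hS ⟨M', hM'⟩
    obtain ⟨M, h1, h2, _, _⟩ := getmin ⟨M', hM'⟩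
    exact hS ⟨M, h1, h2⟩
end

section
/- Fix an LF order ≼ on F and a lex column order ≤ on V. Let X, Y ∈ F with X nonempty and |X| ≤ |Y|, such that left(X) ∉ Y and right(X) ∈ Y, and such that every Z ∈ F with Z ≺ Y satisfies (left(X) ∈ Z ⟺ right(X) ∈ Z) (i.e., left(X) and right(X) lie in the same part of the partition obtained by refining by all sets preceding Y in LF order). Then Max(X) is defined and Y = Max(X). -/
/-- Fix an LF order `lo` on `F` and a lex column order `lv` on `V`. Let
`X, Y ∈ F` with `X` nonempty, `|X| ≤ |Y|`, `left(X) ∉ Y`, `right(X) ∈ Y`, and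
such that every `Z ≺ Y` contains `left(X)` iff it contains `right(X)`. Then
`Max(X)` is defined and `Y = Max(X)`. -/
theorem stmt11 {V : Type*} [Fintype V] [DecidableEq V]
    (F : Finset (Finset V))
    (lo : LinearOrder {X : Finset V // X ∈ F})
    (hLF : ∀ A B : {X : Finset V // X ∈ F},
      (B : Finset V).card < (A : Finset V).card → lo.lt A B)
    (lv : LinearOrder V)
    (hlex : ∀ v w : V, lv.lt v w →
      ∀ Z : {X : Finset V // X ∈ F},
        ¬(v ∈ (Z : Finset V) ↔ w ∈ (Z : Finset V)) →
        (∀ Z' : {X : Finset V // X ∈ F}, lo.lt Z' Z →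
          (v ∈ (Z' : Finset V) ↔ w ∈ (Z' : Finset V))) →
        v ∉ (Z : Finset V) ∧ w ∈ (Z : Finset V))
    (X Y : {X : Finset V // X ∈ F}) (hXne : (X : Finset V).Nonempty)
    (l r : V)
    (hl : l ∈ (X : Finset V) ∧ ∀ u ∈ (X : Finset V), lv.le l u)
    (hr : r ∈ (X : Finset V) ∧ ∀ u ∈ (X : Finset V), lv.le u r)
    (hcard : (X : Finset V).card ≤ (Y : Finset V).card)
    (hlY : l ∉ (Y : Finset V)) (hrY : r ∈ (Y : Finset V))
    (hprev : ∀ Z : {X : Finset V // X ∈ F}, lo.lt Z Y →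
      (l ∈ (Z : Finset V) ↔ r ∈ (Z : Finset V))) :
    Overlaps (Y : Finset V) (X : Finset V) ∧
    (∀ Z : {X : Finset V // X ∈ F},
      (X : Finset V).card ≤ (Z : Finset V).card →
      Overlaps (Z : Finset V) (X : Finset V) → lo.le Y Z) := by
  classical
  letI := lv
  have lonle : ∀ {A B : {X : Finset V // X ∈ F}}, ¬ lo.le A B → lo.lt B A :=
    fun h => @lt_of_not_ge _ lo _ _ h
  have loll : ∀ {A B C : {X : Finset V // X ∈ F}}, lo.le A B → lo.lt B C → lo.lt A C :=
    fun h1 h2 => @lt_of_le_of_lt _ lo.toPreorder _ _ _ h1 h2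
  have lolne : ∀ {A B : {X : Finset V // X ∈ F}}, lo.le A B → A ≠ B → lo.lt A B :=
    fun h1 h2 => @lt_of_le_of_ne _ lo.toPartialOrder _ _ h1 h2
  -- first differing set
  have firstdiff : ∀ a b : V, ∀ Z0 : {X : Finset V // X ∈ F},
      ¬(a ∈ (Z0 : Finset V) ↔ b ∈ (Z0 : Finset V)) →
      ∃ W : {X : Finset V // X ∈ F}, lo.le W Z0 ∧
        ¬(a ∈ (W : Finset V) ↔ b ∈ (W : Finset V)) ∧
        ∀ W' : {X : Finset V // X ∈ F}, lo.lt W' W →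
          (a ∈ (W' : Finset V) ↔ b ∈ (W' : Finset V)) := by
    intro a b Z0 hZ0
    have hS : (Finset.univ.filter
        (fun W : {X : Finset V // X ∈ F} =>
          ¬(a ∈ (W : Finset V) ↔ b ∈ (W : Finset V)))).Nonempty :=
      ⟨Z0, by simpa using hZ0⟩
    obtain ⟨W, hWS, hWmin⟩ := @Finset.exists_min_image _ _ lo _ id hS
    simp only [Finset.mem_filter, Finset.mem_univ, true_and, id] at hWS hWmin
    refine ⟨W, hWmin Z0 hZ0, hWS, ?_⟩
    intro W' hW'
    by_contra hne
    exact absurd (hWmin W' hne) (@not_le_of_gt _ lo.toPreorder _ _ hW')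
  have hlr : lv.lt l r := by
    have hle := hr.2 l hl.1
    rcases lt_or_eq_of_le hle with h | h
    · exact h
    · exact absurd (h ▸ hrY) hlY
  constructor
  · refine ⟨⟨r, Finset.mem_inter.mpr ⟨hrY, hr.1⟩⟩, ?_, ⟨l, Finset.mem_sdiff.mpr ⟨hl.1, hlY⟩⟩⟩
    rcases Finset.eq_empty_or_nonempty ((Y : Finset V) \ (X : Finset V)) with h | h
    · exfalso
      have hsub : (Y : Finset V) ⊆ (X : Finset V) := by
        intro y hy
        by_contra hyx
        exact absurd (Finset.mem_sdiff.mpr ⟨hy, hyx⟩) (by simp [h])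
      have := Finset.eq_of_subset_of_card_le hsub hcard
      exact hlY (this ▸ hl.1)
    · exact h
  · intro Z hZcard hZov
    by_contra hlt
    have hZY : lo.lt Z Y := lonle hlt
    have hZlr : l ∈ (Z : Finset V) ↔ r ∈ (Z : Finset V) := hprev Z hZY
    by_cases hlZ : l ∈ (Z : Finset V)
    · -- both l, r ∈ Z; take u ∈ X \ Z
      have hrZ : r ∈ (Z : Finset V) := hZlr.mp hlZ
      obtain ⟨u, hu⟩ := hZov.2.2
      rw [Finset.mem_sdiff] at hu
      have hur : lv.lt u r := lt_of_le_of_ne (hr.2 u hu.1) (fun h => hu.2 (h ▸ hrZ))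
      have hlu : lv.lt l u := lt_of_le_of_ne (hl.2 u hu.1) (fun h => hu.2 (h ▸ hlZ))
      obtain ⟨W, hWZ, hWdiff, hWfirst⟩ := firstdiff u r Z (by simp [hu.2, hrZ])
      have hWY : lo.lt W Y := loll hWZ hZY
      obtain ⟨huW, hrW⟩ := hlex u r hur W hWdiff hWfirst
      have hlW : l ∈ (W : Finset V) := (hprev W hWY).mpr hrW
      obtain ⟨W', hW'W, hW'diff, hW'first⟩ := firstdiff l u W (by simp [hlW, huW])
      obtain ⟨hlW', huW'⟩ := hlex l u hlu W' hW'diff hW'first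
      have hrW' : r ∉ (W' : Finset V) := fun h =>
        hlW' ((hprev W' (loll hW'W hWY)).mpr h)
      have hW'neW : W' ≠ W := fun h => hlW' (h ▸ hlW)
      have := hWfirst W' (lolne hW'W hW'neW)
      exact hrW' (this.mp huW')
    · -- both l, r ∉ Z; take u ∈ Z ∩ X
      have hrZ : r ∉ (Z : Finset V) := fun h => hlZ (hZlr.mpr h)
      obtain ⟨u, hu⟩ := hZov.1
      rw [Finset.mem_inter] at hu
      have hlu : lv.lt l u := lt_of_le_of_ne (hl.2 u hu.2) (fun h => hlZ (h ▸ hu.1))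
      have hur : lv.lt u r := lt_of_le_of_ne (hr.2 u hu.2) (fun h => hrZ (h ▸ hu.1))
      obtain ⟨W, hWZ, hWdiff, hWfirst⟩ := firstdiff l u Z (by simp [hu.1, hlZ])
      have hWY : lo.lt W Y := loll hWZ hZY
      obtain ⟨hlW, huW⟩ := hlex l u hlu W hWdiff hWfirst
      have hrW : r ∉ (W : Finset V) := fun h => hlW ((hprev W hWY).mpr h)
      obtain ⟨W', hW'W, hW'diff, hW'first⟩ := firstdiff u r W (by simp [huW, hrW])
      obtain ⟨huW', hrW'⟩ := hlex u r hur W' hW'diff hW'first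
      have hlW' : l ∈ (W' : Finset V) :=
        (hprev W' (loll hW'W hWY)).mpr hrW'
      have hW'neW : W' ≠ W := fun h => huW' (h ▸ huW)
      have := hWfirst W' (lolne hW'W hW'neW)
      exact huW' (this.mp hlW')
end

section
/- Fix an LF order ≼ on F and a lex column order ≤ on V. Let X, Y ∈ F with X ∩ Y ≠ ∅, Max(X) defined, and |X| ≤ |Y| ≤ |Max(X)|. Then: if left(X) ∉ Y, then Y overlaps X; if left(X) ∈ Y and right(X) ∉ Y, then Y overlaps X; and if left(X) ∈ Y and right(X) ∈ Y, then Y overlaps Max(X). -/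
/-- Fix an LF order `lo` on `F` and a lex column order `lv` on `V`. Let
`X, Y ∈ F` with `X ∩ Y ≠ ∅`, `Max(X)` defined (here `M`), and
`|X| ≤ |Y| ≤ |Max(X)|`. Then: if `left(X) ∉ Y` then `Y` overlaps `X`;
if `left(X) ∈ Y` and `right(X) ∉ Y` then `Y` overlaps `X`; and if
`left(X) ∈ Y` and `right(X) ∈ Y` then `Y` overlaps `Max(X)`. -/
theorem stmt12 {V : Type*} [Fintype V] [DecidableEq V]
    (F : Finset (Finset V))
    (lo : LinearOrder {X : Finset V // X ∈ F})
    (hLF : ∀ A B : {X : Finset V // X ∈ F},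
      (B : Finset V).card < (A : Finset V).card → lo.lt A B)
    (lv : LinearOrder V)
    (hlex : ∀ v w : V, lv.lt v w →
      ∀ Z : {X : Finset V // X ∈ F},
        ¬(v ∈ (Z : Finset V) ↔ w ∈ (Z : Finset V)) →
        (∀ Z' : {X : Finset V // X ∈ F}, lo.lt Z' Z →
          (v ∈ (Z' : Finset V) ↔ w ∈ (Z' : Finset V))) →
        v ∉ (Z : Finset V) ∧ w ∈ (Z : Finset V))
    (X Y : {X : Finset V // X ∈ F})
    (l r : V)
    (hl : l ∈ (X : Finset V) ∧ ∀ u ∈ (X : Finset V), lv.le l u)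
    (hr : r ∈ (X : Finset V) ∧ ∀ u ∈ (X : Finset V), lv.le u r)
    (hXY : ((X : Finset V) ∩ (Y : Finset V)).Nonempty)
    (M : {X : Finset V // X ∈ F})
    (hMover : Overlaps (M : Finset V) (X : Finset V))
    (hMcard : (X : Finset V).card ≤ (M : Finset V).card)
    (hMleast : ∀ Z : {X : Finset V // X ∈ F},
      (X : Finset V).card ≤ (Z : Finset V).card →
      Overlaps (Z : Finset V) (X : Finset V) → lo.le M Z)
    (h1 : (X : Finset V).card ≤ (Y : Finset V).card)
    (h2 : (Y : Finset V).card ≤ (M : Finset V).card) :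
    (l ∉ (Y : Finset V) → Overlaps (Y : Finset V) (X : Finset V)) ∧
    (l ∈ (Y : Finset V) → r ∉ (Y : Finset V) →
      Overlaps (Y : Finset V) (X : Finset V)) ∧
    (l ∈ (Y : Finset V) → r ∈ (Y : Finset V) →
      Overlaps (Y : Finset V) (M : Finset V)) := by
  classical
  letI := lv
  have llt_le : ∀ {A B : {X : Finset V // X ∈ F}}, lo.lt A B → lo.le A B :=
    fun h => ((lo.lt_iff_le_not_ge _ _).1 h).1
  have llt_nle : ∀ {A B : {X : Finset V // X ∈ F}}, lo.lt A B → ¬ lo.le B A :=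
    fun h => ((lo.lt_iff_le_not_ge _ _).1 h).2
  obtain ⟨hlX, hlmin⟩ := hl
  obtain ⟨hrX, hrmax⟩ := hr
  obtain ⟨hMX, hMdX, hXdM⟩ := hMover
  -- Lemma A: every set strictly below M (in lo) does not separate elements of X
  have lemA : ∀ Z : {X : Finset V // X ∈ F}, lo.lt Z M →
      ∀ v ∈ (X : Finset V), ∀ w ∈ (X : Finset V),
      (v ∈ (Z : Finset V) ↔ w ∈ (Z : Finset V)) := by
    have main : ∀ Z : {X : Finset V // X ∈ F}, lo.lt Z M →
        ∀ v ∈ (X : Finset V), ∀ w ∈ (X : Finset V),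
        v ∈ (Z : Finset V) → w ∈ (Z : Finset V) := by
      intro Z hZM v hvX w hwX hvZ
      by_contra hwZ
      have hcard : (M : Finset V).card ≤ (Z : Finset V).card := by
        by_contra h
        exact llt_nle hZM (llt_le (hLF M Z (Nat.lt_of_not_le h)))
      have hZX : ¬ (Z : Finset V) ⊆ (X : Finset V) := by
        intro hsub
        have : (Z : Finset V) = (X : Finset V) :=
          Finset.eq_of_subset_of_card_le hsub (le_trans hMcard hcard)
        rw [this] at hwZ
        exact hwZ hwX
      have hov : Overlaps (Z : Finset V) (X : Finset V) :=
        ⟨⟨v, Finset.mem_inter.2 ⟨hvZ, hvX⟩⟩,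
         Finset.sdiff_nonempty.2 hZX,
         ⟨w, Finset.mem_sdiff.2 ⟨hwX, hwZ⟩⟩⟩
      exact llt_nle hZM (hMleast Z (le_trans hMcard hcard) hov)
    intro Z hZM v hvX w hwX
    exact ⟨fun h => main Z hZM v hvX w hwX h, fun h => main Z hZM w hwX v hvX h⟩
  -- first differing set
  have key : ∀ v w : V, lv.lt v w → ∀ W : {X : Finset V // X ∈ F},
      ¬(v ∈ (W : Finset V) ↔ w ∈ (W : Finset V)) →
      ∃ Z : {X : Finset V // X ∈ F}, lo.le Z W ∧
        ¬(v ∈ (Z : Finset V) ↔ w ∈ (Z : Finset V)) ∧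
        v ∉ (Z : Finset V) ∧ w ∈ (Z : Finset V) := by
    intro v w hvw W hW
    set S : Finset {X : Finset V // X ∈ F} :=
      Finset.univ.filter (fun Z => ¬(v ∈ (Z : Finset V) ↔ w ∈ (Z : Finset V))) with hS
    have hWS : W ∈ S := by simp [hS, hW]
    obtain ⟨Z, hZS, hZmin⟩ := @Finset.exists_min_image _ _ lo S id ⟨W, hWS⟩
    have hZdiff : ¬(v ∈ (Z : Finset V) ↔ w ∈ (Z : Finset V)) := by
      simpa [hS] using hZS
    have hfirst : ∀ Z' : {X : Finset V // X ∈ F}, lo.lt Z' Z →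
        (v ∈ (Z' : Finset V) ↔ w ∈ (Z' : Finset V)) := by
      intro Z' hZ'
      by_contra h
      have hmem : Z' ∈ S := by simp [hS, h]
      exact llt_nle hZ' (hZmin Z' hmem)
    obtain ⟨hvo, hwi⟩ := hlex v w hvw Z hZdiff hfirst
    exact ⟨Z, hZmin W hWS, hZdiff, hvo, hwi⟩
  -- l ∉ M
  have hlM : l ∉ (M : Finset V) := by
    intro hlinM
    obtain ⟨a, ha⟩ := hXdM
    rw [Finset.mem_sdiff] at ha
    have hla : lv.lt l a := lt_of_le_of_ne (hlmin a ha.1)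
      (by rintro rfl; exact ha.2 hlinM)
    obtain ⟨Z, hZM, hdiff, hvo, hwi⟩ := key l a hla M
      (by simp [hlinM, ha.2])
    by_cases hEq : Z = M
    · rw [hEq] at hvo; exact hvo hlinM
    · exact hdiff (lemA Z ((lo.lt_iff_le_not_ge _ _).2
        ⟨hZM, fun h => hEq (lo.le_antisymm _ _ hZM h)⟩) l hlX a ha.1)
  -- r ∈ M
  have hrM : r ∈ (M : Finset V) := by
    by_contra hrnM
    obtain ⟨b, hb⟩ := hMX
    rw [Finset.mem_inter] at hb
    have hbr : lv.lt b r := lt_of_le_of_ne (hrmax b hb.2)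
      (by rintro rfl; exact hrnM hb.1)
    obtain ⟨Z, hZM, hdiff, hvo, hwi⟩ := key b r hbr M
      (by simp [hb.1, hrnM])
    by_cases hEq : Z = M
    · rw [hEq] at hwi; exact hrnM hwi
    · exact hdiff (lemA Z ((lo.lt_iff_le_not_ge _ _).2
        ⟨hZM, fun h => hEq (lo.le_antisymm _ _ hZM h)⟩) b hb.2 r hrX)
  obtain ⟨p, hp⟩ := hXY
  rw [Finset.mem_inter] at hp
  refine ⟨?_, ?_, ?_⟩
  · intro hlY
    refine ⟨⟨p, Finset.mem_inter.2 ⟨hp.2, hp.1⟩⟩, ?_,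
      ⟨l, Finset.mem_sdiff.2 ⟨hlX, hlY⟩⟩⟩
    refine Finset.sdiff_nonempty.2 (fun hsub => ?_)
    have : (Y : Finset V) = (X : Finset V) :=
      Finset.eq_of_subset_of_card_le hsub h1
    rw [this] at hlY
    exact hlY hlX
  · intro hlY hrY
    refine ⟨⟨p, Finset.mem_inter.2 ⟨hp.2, hp.1⟩⟩, ?_,
      ⟨r, Finset.mem_sdiff.2 ⟨hrX, hrY⟩⟩⟩
    refine Finset.sdiff_nonempty.2 (fun hsub => ?_)
    have : (Y : Finset V) = (X : Finset V) :=
      Finset.eq_of_subset_of_card_le hsub h1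
    rw [this] at hrY
    exact hrY hrX
  · intro hlY hrY
    refine ⟨⟨r, Finset.mem_inter.2 ⟨hrY, hrM⟩⟩,
      ⟨l, Finset.mem_sdiff.2 ⟨hlY, hlM⟩⟩, ?_⟩
    refine Finset.sdiff_nonempty.2 (fun hsub => ?_)
    have : (M : Finset V) = (Y : Finset V) :=
      Finset.eq_of_subset_of_card_le hsub h2
    rw [← this] at hlY
    exact hlM hlY
end
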